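/- Let Δₙ denote the standard simplex of ℝⁿ. A function f : ℝⁿ → ℝ is monotone, additively homogeneous and positively homogeneous if, and only if, for every x ∈ ℝⁿ, f(x) = min_{y ∈ ℝⁿ} max_{p ∈ Δₙ, ⟨p,y⟩ ≤ f(y)} ⟨p,x⟩, where ⟨·,·⟩ is the usual scalar product on ℝⁿ, both the outer minimum over y and the inner maximum being attained. Moreover the value does not change if the minimum is restricted to those y ∈ ℝⁿ with f(y) = 0. -/

import Mathlib

namespace Stmt13Aux


variable {n : ℕ}

/-- The inner constraint set. -/
def S (y : Fin n → ℝ) (c : ℝ) (x : Fin n → ℝ) : Set ℝ :=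
  {s : ℝ | ∃ p : Fin n → ℝ,
    ((∀ i, 0 ≤ p i) ∧ ∑ i, p i = 1) ∧ (∑ j, p j * y j) ≤ c ∧ s = ∑ j, p j * x j}

/-- two-point distribution -/
def tp (i j : Fin n) (t : ℝ) : Fin n → ℝ :=
  fun k => (if k = i then t else 0) + (if k = j then (1 - t) else 0)

lemma tp_nonneg {i j : Fin n} {t : ℝ} (h0 : 0 ≤ t) (h1 : t ≤ 1) (k : Fin n) :
    0 ≤ tp i j t k := by
  unfold tp; have := sub_nonneg.mpr h1; split_ifs <;> linarith

lemma tp_sum (i j : Fin n) (t : ℝ) : ∑ k, tp i j t k = 1 := by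
  unfold tp
  rw [Finset.sum_add_distrib]
  simp [Finset.sum_ite_eq']

lemma tp_dot (i j : Fin n) (t : ℝ) (z : Fin n → ℝ) :
    ∑ k, tp i j t k * z k = t * z i + (1 - t) * z j := by
  unfold tp
  simp [add_mul, Finset.sum_add_distrib, ite_mul, Finset.sum_ite_eq']

/-- one-point distribution -/
lemma op_mem {y x : Fin n → ℝ} {c : ℝ} (i : Fin n) (hi : y i ≤ c) : x i ∈ S y c x := by
  refine ⟨tp i i 1, ⟨tp_nonneg zero_le_one le_rfl, tp_sum i i 1⟩, ?_, ?_⟩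
  · rw [tp_dot]; linarith
  · rw [tp_dot]; ring




def K (y : Fin n → ℝ) (c : ℝ) : Set (Fin n → ℝ) :=
  {p | ((∀ i, 0 ≤ p i) ∧ ∑ i, p i = 1) ∧ (∑ j, p j * y j) ≤ c}

lemma K_compact (y : Fin n → ℝ) (c : ℝ) : IsCompact (K y c) := by
  have hsub : K y c ⊆ Set.Icc (0 : Fin n → ℝ) 1 := by
    rintro p ⟨⟨h0, h1⟩, -⟩
    constructor
    · intro i; exact h0 i
    · intro i
      have : p i ≤ ∑ j, p j := Finset.single_le_sum (fun j _ => h0 j) (Finset.mem_univ i)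
      simpa [h1] using this
  have hclosed : IsClosed (K y c) := by
    have h1 : IsClosed {p : Fin n → ℝ | ∀ i, 0 ≤ p i} := by
      have : {p : Fin n → ℝ | ∀ i, 0 ≤ p i} = ⋂ i, {p | 0 ≤ p i} := by
        ext p; simp
      rw [this]
      exact isClosed_iInter fun i => isClosed_le continuous_const (continuous_apply i)
    have h2 : IsClosed {p : Fin n → ℝ | ∑ i, p i = 1} :=
      isClosed_eq (by continuity) continuous_const
    have h3 : IsClosed {p : Fin n → ℝ | (∑ j, p j * y j) ≤ c} :=
      isClosed_le (by continuity) continuous_const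
    have : K y c = ({p : Fin n → ℝ | ∀ i, 0 ≤ p i} ∩ {p | ∑ i, p i = 1}) ∩
        {p | (∑ j, p j * y j) ≤ c} := by
      ext p; simp [K, and_assoc]
    rw [this]
    exact ((h1.inter h2).inter h3)
  exact (isCompact_Icc).of_isClosed_subset hclosed hsub

lemma max_exists {y : Fin n → ℝ} {c : ℝ} (x : Fin n → ℝ) (hne : (K y c).Nonempty) :
    ∃ r, IsGreatest (S y c x) r := by
  obtain ⟨p, hp, hmax⟩ := (K_compact y c).exists_isMaxOn hne
    (Continuous.continuousOn (by continuity : Continuous fun p : Fin n → ℝ => ∑ j, p j * x j))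
  refine ⟨∑ j, p j * x j, ⟨p, hp.1, hp.2, rfl⟩, ?_⟩
  rintro s ⟨q, hq1, hq2, rfl⟩
  exact hmax (⟨hq1, hq2⟩ : _ ∈ K y c)



variable {n : ℕ} {f : (Fin n → ℝ) → ℝ}

lemma neF (hn : 0 < n) : (Finset.univ : Finset (Fin n)).Nonempty := by
  have : Nonempty (Fin n) := ⟨⟨0, hn⟩⟩
  exact Finset.univ_nonempty

lemma f_zero (hpos : ∀ (c : ℝ), 0 ≤ c → ∀ x : Fin n → ℝ, f (c • x) = c * f x) :
    f 0 = 0 := by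
  have := hpos 0 le_rfl 0
  simpa using this

lemma inf_le_f (hn : 0 < n) (hmono : Monotone f)
    (hadd : ∀ (x : Fin n → ℝ) (c : ℝ), f (x + c • (1 : Fin n → ℝ)) = f x + c)
    (hf0 : f 0 = 0) (y : Fin n → ℝ) :
    Finset.univ.inf' (neF hn) y ≤ f y := by
  have h1 : f (0 + (Finset.univ.inf' (neF hn) y) • (1 : Fin n → ℝ)) =
      Finset.univ.inf' (neF hn) y := by rw [hadd, hf0, zero_add]
  have h2 : (0 + (Finset.univ.inf' (neF hn) y) • (1 : Fin n → ℝ)) ≤ y := by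
    intro k
    simp only [zero_add, Pi.smul_apply, Pi.one_apply, smul_eq_mul, mul_one]
    exact Finset.inf'_le y (Finset.mem_univ k)
  calc Finset.univ.inf' (neF hn) y = _ := h1.symm
    _ ≤ f y := hmono h2

lemma f_le_sup (hn : 0 < n) (hmono : Monotone f)
    (hadd : ∀ (x : Fin n → ℝ) (c : ℝ), f (x + c • (1 : Fin n → ℝ)) = f x + c)
    (hf0 : f 0 = 0) (y : Fin n → ℝ) :
    f y ≤ Finset.univ.sup' (neF hn) y := by
  have h1 : f (0 + (Finset.univ.sup' (neF hn) y) • (1 : Fin n → ℝ)) =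
      Finset.univ.sup' (neF hn) y := by rw [hadd, hf0, zero_add]
  have h2 : y ≤ (0 + (Finset.univ.sup' (neF hn) y) • (1 : Fin n → ℝ)) := by
    intro k
    simp only [zero_add, Pi.smul_apply, Pi.one_apply, smul_eq_mul, mul_one]
    exact Finset.le_sup' y (Finset.mem_univ k)
  calc f y ≤ _ := hmono h2
    _ = _ := h1

lemma nonexpansive (hn : 0 < n) (hmono : Monotone f)
    (hadd : ∀ (x : Fin n → ℝ) (c : ℝ), f (x + c • (1 : Fin n → ℝ)) = f x + c)
    (hpos : ∀ (c : ℝ), 0 ≤ c → ∀ x : Fin n → ℝ, f (c • x) = c * f x)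
    (x y : Fin n → ℝ) {l : ℝ} (hl : 0 ≤ l) :
    f x ≤ l * f y + Finset.univ.sup' (neF hn) (fun i => x i - l * y i) := by
  set M := Finset.univ.sup' (neF hn) (fun i => x i - l * y i) with hM
  have hle : x ≤ l • y + M • (1 : Fin n → ℝ) := by
    intro k
    have : x k - l * y k ≤ M :=
      Finset.le_sup' (fun i => x i - l * y i) (Finset.mem_univ k)
    simp only [Pi.add_apply, Pi.smul_apply, Pi.one_apply, smul_eq_mul, mul_one]
    linarith
  calc f x ≤ f (l • y + M • 1) := hmono hle
    _ = f (l • y) + M := hadd _ _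
    _ = l * f y + M := by rw [hpos l hl y]


lemma dot_eq (y : Fin n → ℝ) (c : ℝ) (h1 : ∃ i, y i ≤ c) (h2 : ∃ j, c ≤ y j) :
    ∃ p : Fin n → ℝ, (∀ i, 0 ≤ p i) ∧ ∑ i, p i = 1 ∧ ∑ j, p j * y j = c := by
  obtain ⟨i, hi⟩ := h1
  obtain ⟨j, hj⟩ := h2
  rcases eq_or_lt_of_le (hi.trans hj) with heq | hlt
  · have hc : c = y i := le_antisymm (heq ▸ hj) hi
    refine ⟨tp i i 1, tp_nonneg zero_le_one le_rfl, tp_sum i i 1, ?_⟩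
    rw [tp_dot, hc]; ring
  · set t := (y j - c) / (y j - y i) with ht
    have hden : 0 < y j - y i := by linarith
    have ht0 : 0 ≤ t := div_nonneg (by linarith) hden.le
    have ht1 : t ≤ 1 := by rw [div_le_one hden]; linarith
    refine ⟨tp i j t, tp_nonneg ht0 ht1, tp_sum i j t, ?_⟩
    rw [tp_dot, ht]
    field_simp
    ring

lemma key (hn : 0 < n) (hmono : Monotone f)
    (hadd : ∀ (x : Fin n → ℝ) (c : ℝ), f (x + c • (1 : Fin n → ℝ)) = f x + c)
    (hpos : ∀ (c : ℝ), 0 ≤ c → ∀ x : Fin n → ℝ, f (c • x) = c * f x)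
    (x y : Fin n → ℝ) {r : ℝ} (hr : IsGreatest (S y (f y) x) r) : f x ≤ r := by
  by_contra hcon
  push_neg at hcon
  have hf0 := f_zero hpos
  set m := f y with hm
  have hub := hr.2
  have hsingle : ∀ i, y i ≤ m → x i < f x := fun i hi =>
    lt_of_le_of_lt (hub (op_mem i hi)) hcon
  have hpair : ∀ i j, y i < m → m < y j →
      (y j - m) * x i + (m - y i) * x j < f x * (y j - y i) := by
    intro i j hi hj
    have hden : 0 < y j - y i := by linarith
    set t := (y j - m) / (y j - y i) with ht
    have ht0 : 0 ≤ t := div_nonneg (by linarith) hden.le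
    have ht1 : t ≤ 1 := by rw [div_le_one hden]; linarith
    have hmem : (t * x i + (1 - t) * x j) ∈ S y m x := by
      refine ⟨tp i j t, ⟨tp_nonneg ht0 ht1, tp_sum i j t⟩, ?_, (tp_dot i j t x).symm⟩
      rw [tp_dot, ht]
      have : (y j - m) / (y j - y i) * y i + (1 - (y j - m) / (y j - y i)) * y j = m := by
        field_simp; ring
      rw [this]
    have hlt : t * x i + (1 - t) * x j < f x := lt_of_le_of_lt (hub hmem) hcon
    have := mul_lt_mul_of_pos_right hlt hden
    calc (y j - m) * x i + (m - y i) * x j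
        = (t * x i + (1 - t) * x j) * (y j - y i) := by rw [ht]; field_simp; try ring
      _ < f x * (y j - y i) := this
  -- T and U
  set T := Finset.univ.sup' (neF hn)
    (fun j => if m < y j then (x j - f x) / (y j - m) else 0) with hT
  have hexle : ∃ i, y i ≤ m := by
    obtain ⟨i0, -, hi0⟩ := Finset.exists_mem_eq_inf' (neF hn) y
    exact ⟨i0, hi0 ▸ inf_le_f hn hmono hadd hf0 y⟩
  have hTle : ∀ j, (if m < y j then (x j - f x) / (y j - m) else 0) ≤ T := by
    intro j
    have := Finset.le_sup' (fun j => if m < y j then (x j - f x) / (y j - m) else 0)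
      (Finset.mem_univ j)
    rw [← hT] at this
    exact this
  have hT0 : 0 ≤ T := by
    obtain ⟨i0, hi0⟩ := hexle
    have := hTle i0
    rwa [if_neg (not_lt.2 hi0)] at this
  set U := Finset.univ.inf' (neF hn)
    (fun i => if y i < m then (f x - x i) / (m - y i) else T + 1) with hU
  have hTU : T < U := by
    rw [hU, Finset.lt_inf'_iff]
    intro i _
    by_cases hi : y i < m
    · simp only [hi, if_true]
      rw [hT, Finset.sup'_lt_iff]
      intro j _
      by_cases hj : m < y j
      · simp only [hj, if_true]
        rw [div_lt_div_iff₀ (by linarith) (by linarith)]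
        have := hpair i j hi hj
        nlinarith
      · simp only [hj, if_false]
        have hxi := hsingle i hi.le
        exact div_pos (by linarith) (by linarith)
    · simp only [hi, if_false]
      linarith
  set l := (T + U) / 2 with hl
  have hl0 : 0 ≤ l := by rw [hl]; linarith
  have hlT : T < l := by rw [hl]; linarith
  have hlU : l < U := by rw [hl]; linarith
  have hbound : ∀ i, x i - l * y i < f x - l * m := by
    intro i
    rcases lt_trichotomy (y i) m with h | h | h
    · have h1 : l < (f x - x i) / (m - y i) := by
        refine lt_of_lt_of_le hlU ?_
        have := Finset.inf'_le (fun i => if y i < m then (f x - x i) / (m - y i) else T + 1)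
          (Finset.mem_univ i)
        rw [← hU] at this
        rwa [if_pos h] at this
      rw [lt_div_iff₀ (by linarith)] at h1
      nlinarith
    · have := hsingle i h.le
      rw [h]; linarith
    · have h1 : (x i - f x) / (y i - m) < l := by
        refine lt_of_le_of_lt ?_ hlT
        have := hTle i
        rwa [if_pos h] at this
      rw [div_lt_iff₀ (by linarith)] at h1
      nlinarith
  have hne := nonexpansive hn hmono hadd hpos x y hl0
  have hsup : Finset.univ.sup' (neF hn) (fun i => x i - l * y i) < f x - l * m := by
    rw [Finset.sup'_lt_iff]
    intro i _; exact hbound i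
  rw [← hm] at hne
  linarith


lemma dot_shift (p x : Fin n → ℝ) (d : ℝ) (hsum : ∑ i, p i = 1) :
    ∑ j, p j * (x + d • (1 : Fin n → ℝ)) j = (∑ j, p j * x j) + d := by
  have h : ∀ j ∈ Finset.univ, p j * (x + d • (1 : Fin n → ℝ)) j = p j * x j + d * p j := by
    intro j _
    simp only [Pi.add_apply, Pi.smul_apply, Pi.one_apply, smul_eq_mul, mul_one]
    ring
  rw [Finset.sum_congr rfl h, Finset.sum_add_distrib, ← Finset.mul_sum, hsum, mul_one]

lemma dot_scale (p x : Fin n → ℝ) (c : ℝ) :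
    ∑ j, p j * (c • x) j = c * ∑ j, p j * x j := by
  rw [Finset.mul_sum]
  refine Finset.sum_congr rfl fun j _ => ?_
  simp only [Pi.smul_apply, smul_eq_mul]
  ring

lemma G_shift {y x : Fin n → ℝ} {b r : ℝ} (d : ℝ) (hG : IsGreatest (S y b x) r) :
    IsGreatest (S y b (x + d • (1 : Fin n → ℝ))) (r + d) := by
  constructor
  · obtain ⟨p, hP, hle, hdot⟩ := hG.1
    exact ⟨p, hP, hle, by rw [dot_shift p x d hP.2, ← hdot]⟩
  · rintro s ⟨p, hP, hle, rfl⟩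
    rw [dot_shift p x d hP.2]
    have : (∑ j, p j * x j) ≤ r := hG.2 ⟨p, hP, hle, rfl⟩
    linarith

lemma G_scale {y x : Fin n → ℝ} {b r : ℝ} {c : ℝ} (hc : 0 ≤ c)
    (hG : IsGreatest (S y b x) r) :
    IsGreatest (S y b (c • x)) (c * r) := by
  constructor
  · obtain ⟨p, hP, hle, hdot⟩ := hG.1
    exact ⟨p, hP, hle, by rw [dot_scale, ← hdot]⟩
  · rintro s ⟨p, hP, hle, rfl⟩
    rw [dot_scale]
    have : (∑ j, p j * x j) ≤ r := hG.2 ⟨p, hP, hle, rfl⟩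
    exact mul_le_mul_of_nonneg_left this hc

end Stmt13Aux

open Stmt13Aux in
/-- With `Δₙ` the standard simplex of `ℝⁿ`, a function `f : ℝⁿ → ℝ` is monotone,
additively homogeneous and positively homogeneous if and only if, for every `x`,
`f x = min_{y} max_{p ∈ Δₙ, ⟨p,y⟩ ≤ f y} ⟨p, x⟩`, both the outer minimum over `y` and the
inner maximum being attained. Moreover the value does not change if the minimum is restricted
to those `y` with `f y = 0`. -/
theorem stmt13 {n : ℕ} (hn : 0 < n) (f : (Fin n → ℝ) → ℝ) :
    (Monotone f ∧
        (∀ (x : Fin n → ℝ) (c : ℝ), f (x + c • (1 : Fin n → ℝ)) = f x + c) ∧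
        (∀ (c : ℝ), 0 ≤ c → ∀ x : Fin n → ℝ, f (c • x) = c * f x)) ↔
      ∀ x : Fin n → ℝ,
        (∀ y : Fin n → ℝ, ∃ r : ℝ,
          IsGreatest {s : ℝ | ∃ p : Fin n → ℝ,
            ((∀ i, 0 ≤ p i) ∧ ∑ i, p i = 1) ∧ (∑ j, p j * y j) ≤ f y ∧
              s = ∑ j, p j * x j} r) ∧
        IsLeast {r : ℝ | ∃ y : Fin n → ℝ,
          IsGreatest {s : ℝ | ∃ p : Fin n → ℝ,
            ((∀ i, 0 ≤ p i) ∧ ∑ i, p i = 1) ∧ (∑ j, p j * y j) ≤ f y ∧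
              s = ∑ j, p j * x j} r} (f x) ∧
        IsLeast {r : ℝ | ∃ y : Fin n → ℝ, f y = 0 ∧
          IsGreatest {s : ℝ | ∃ p : Fin n → ℝ,
            ((∀ i, 0 ≤ p i) ∧ ∑ i, p i = 1) ∧ (∑ j, p j * y j) ≤ f y ∧
              s = ∑ j, p j * x j} r} (f x) := by
  constructor
  · rintro ⟨hmono, hadd, hpos⟩ x
    have hf0 := f_zero hpos
    have hexle : ∀ y : Fin n → ℝ, ∃ i, y i ≤ f y := by
      intro y
      obtain ⟨i0, -, hi0⟩ := Finset.exists_mem_eq_inf' (neF hn) y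
      exact ⟨i0, hi0 ▸ inf_le_f hn hmono hadd hf0 y⟩
    have hexge : ∀ y : Fin n → ℝ, ∃ i, f y ≤ y i := by
      intro y
      obtain ⟨i0, -, hi0⟩ := Finset.exists_mem_eq_sup' (neF hn) y
      exact ⟨i0, hi0 ▸ f_le_sup hn hmono hadd hf0 y⟩
    -- the witness point
    set y0 : Fin n → ℝ := x + (-f x) • (1 : Fin n → ℝ) with hy0
    have hfy0 : f y0 = 0 := by rw [hy0, hadd]; ring
    have hy0dot : ∀ p : Fin n → ℝ, (∑ i, p i = 1) →
        ∑ j, p j * y0 j = (∑ j, p j * x j) - f x := by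
      intro p hp
      rw [hy0, dot_shift p x (-f x) hp]; ring
    have hGr : IsGreatest (S y0 (f y0) x) (f x) := by
      constructor
      · obtain ⟨p, hnn, hsum, hdot⟩ := dot_eq y0 (f y0)
          (hexle y0) (hexge y0)
        refine ⟨p, ⟨hnn, hsum⟩, le_of_eq hdot, ?_⟩
        have := hy0dot p hsum
        rw [hdot, hfy0] at this
        linarith
      · rintro s ⟨p, ⟨hnn, hsum⟩, hle, rfl⟩
        have := hy0dot p hsum
        rw [hfy0] at hle
        linarith
    refine ⟨?_, ?_, ?_⟩
    · intro y
      obtain ⟨i, hi⟩ := hexle y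
      have hKne : (K y (f y)).Nonempty :=
        ⟨tp i i 1, ⟨tp_nonneg zero_le_one le_rfl, tp_sum i i 1⟩,
          by rw [tp_dot]; linarith⟩
      exact max_exists x hKne
    · exact ⟨⟨y0, hGr⟩, by rintro r ⟨y, hG⟩; exact key hn hmono hadd hpos x y hG⟩
    · exact ⟨⟨y0, hfy0, hGr⟩, by rintro r ⟨y, -, hG⟩; exact key hn hmono hadd hpos x y hG⟩
  · intro hR
    have hL : ∀ x : Fin n → ℝ,
        IsLeast {r : ℝ | ∃ y : Fin n → ℝ, IsGreatest (S y (f y) x) r} (f x) :=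
      fun x => (hR x).2.1
    have hEx : ∀ x y : Fin n → ℝ, ∃ r, IsGreatest (S y (f y) x) r :=
      fun x => (hR x).1
    refine ⟨?_, ?_, ?_⟩
    · -- monotone
      intro x x' hxx'
      obtain ⟨y0, hG'⟩ := (hL x').1
      obtain ⟨r, hG⟩ := hEx x y0
      have h1 : f x ≤ r := (hL x).2 ⟨y0, hG⟩
      have h2 : r ≤ f x' := by
        obtain ⟨p, hP, hle, hdot⟩ := hG.1
        have hmono : (∑ j, p j * x j) ≤ ∑ j, p j * x' j :=
          Finset.sum_le_sum fun j _ => mul_le_mul_of_nonneg_left (hxx' j) (hP.1 j)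
        have := hG'.2 ⟨p, hP, hle, rfl⟩
        linarith [hdot ▸ hmono]
      linarith
    · -- additively homogeneous
      intro x c
      obtain ⟨y0, hG⟩ := (hL x).1
      obtain ⟨y1, hG1⟩ := (hL (x + c • (1 : Fin n → ℝ))).1
      have h1 : f (x + c • (1 : Fin n → ℝ)) ≤ f x + c :=
        (hL (x + c • 1)).2 ⟨y0, G_shift c hG⟩
      have h2 := G_shift (-c) hG1
      have hxx : (x + c • (1 : Fin n → ℝ)) + (-c) • (1 : Fin n → ℝ) = x := by
        funext k; simp
      rw [hxx] at h2
      have h3 : f x ≤ f (x + c • (1 : Fin n → ℝ)) + -c := (hL x).2 ⟨y1, h2⟩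
      linarith
    · -- positively homogeneous
      intro c hc x
      obtain ⟨y0, hG⟩ := (hL x).1
      have h1 : f (c • x) ≤ c * f x := (hL (c • x)).2 ⟨y0, G_scale hc hG⟩
      rcases eq_or_lt_of_le hc with hc0 | hc0
      · obtain ⟨y1, hG1⟩ := (hL (c • x)).1
        obtain ⟨p, hP, hle, hdot⟩ := hG1.1
        rw [← hc0] at hdot ⊢
        rw [dot_scale] at hdot
        rw [hdot]; ring
      · obtain ⟨y1, hG1⟩ := (hL (c • x)).1
        have h2 := G_scale (inv_nonneg.mpr hc) hG1
        rw [smul_smul, inv_mul_cancel₀ (ne_of_gt hc0), one_smul] at h2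
        have h3 : f x ≤ c⁻¹ * f (c • x) := (hL x).2 ⟨y1, h2⟩
        have h4 := mul_le_mul_of_nonneg_left h3 hc
        rw [← mul_assoc, mul_inv_cancel₀ (ne_of_gt hc0), one_mul] at h4
        linarith
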